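/- Let p be an odd prime, σ the permutation x ↦ x+1 and δ the permutation x ↦ x^(p-2) of F_p. If p ≡ 3 (mod 4), then the subgroup of the symmetric group on F_p generated by σ and δ is the alternating group on F_p. -/

import Mathlib

open Equiv Equiv.Perm Subgroup

variable {α : Type*} [DecidableEq α]

/-- The 3-cycle `a ↦ b ↦ c ↦ a`. -/
def trip (a b c : α) : Equiv.Perm α := Equiv.swap a c * Equiv.swap a b

lemma trip_fst {a b c : α} (hba : b ≠ a) (hbc : b ≠ c) : trip a b c a = b := by
  simp [trip, Equiv.swap_apply_of_ne_of_ne hba hbc]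

lemma trip_snd (a b c : α) : trip a b c b = c := by
  simp [trip]

lemma trip_thd {a b c : α} (hca : c ≠ a) (hcb : c ≠ b) : trip a b c c = a := by
  simp [trip, Equiv.swap_apply_of_ne_of_ne hca hcb]

lemma trip_other {a b c y : α} (hya : y ≠ a) (hyb : y ≠ b) (hyc : y ≠ c) :
    trip a b c y = y := by
  simp [trip, Equiv.swap_apply_of_ne_of_ne hya hyb, Equiv.swap_apply_of_ne_of_ne hya hyc]

lemma trip_inv (a b c : α) : (trip a b c)⁻¹ = trip a c b := by
  simp [trip, mul_inv_rev]

lemma trip_conj (π : Equiv.Perm α) (a b c : α) :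
    π * trip a b c * π⁻¹ = trip (π a) (π b) (π c) :=
  calc π * trip a b c * π⁻¹ = (π * Equiv.swap a c * π⁻¹) * (π * Equiv.swap a b * π⁻¹) := by
        simp [trip, mul_assoc]
    _ = trip (π a) (π b) (π c) := by
        rw [← Equiv.swap_apply_apply, ← Equiv.swap_apply_apply]; rfl

lemma trip_rot {a b c : α} (hab : a ≠ b) (hac : a ≠ c) (hbc : b ≠ c) :
    trip a b c = trip c a b := by
  ext y
  by_cases hya : y = a
  · rw [hya, trip_fst (Ne.symm hab) hbc, trip_snd]
  by_cases hyb : y = b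
  · rw [hyb, trip_snd, trip_thd hbc (Ne.symm hab)]
  by_cases hyc : y = c
  · rw [hyc, trip_thd (Ne.symm hac) (Ne.symm hbc), trip_fst hac hab]
  · rw [trip_other hya hyb hyc, trip_other hyc hya hyb]

lemma trip_mul {x a b c : α} (hxa : x ≠ a) (hxb : x ≠ b) (hxc : x ≠ c)
    (hab : a ≠ b) (hac : a ≠ c) (hbc : b ≠ c) :
    trip a b c = trip x a b * trip x b c := by
  ext y
  rw [Equiv.Perm.mul_apply]
  by_cases hyx : y = x
  · rw [hyx, trip_other hxa hxb hxc, trip_fst (Ne.symm hxb) hbc,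
      trip_thd (Ne.symm hxb) (Ne.symm hab)]
  by_cases hya : y = a
  · rw [hya, trip_fst (Ne.symm hab) hbc, trip_other (Ne.symm hxa) hab hac, trip_snd]
  by_cases hyb : y = b
  · rw [hyb, trip_snd, trip_snd, trip_other (Ne.symm hxc) (Ne.symm hac) (Ne.symm hbc)]
  by_cases hyc : y = c
  · rw [hyc, trip_thd (Ne.symm hac) (Ne.symm hbc), trip_thd (Ne.symm hxc) (Ne.symm hbc),
      trip_fst (Ne.symm hxa) hab]
  · rw [trip_other hya hyb hyc, trip_other hyx hyb hyc, trip_other hyx hya hyb]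

lemma IsThreeCycle.eq_trip [Fintype α] {τ : Equiv.Perm α} (h : τ.IsThreeCycle) :
    ∃ a b c : α, a ≠ b ∧ a ≠ c ∧ b ≠ c ∧ τ = trip a b c := by
  obtain ⟨a, ha, -⟩ := h.isCycle
  have h3 : τ ^ 3 = 1 := by
    rw [← h.orderOf]; exact pow_orderOf_eq_one τ
  have h3a : τ (τ (τ a)) = a := by
    have := Equiv.ext_iff.mp h3 a
    simpa [pow_succ, Equiv.Perm.mul_apply] using this
  have hab : a ≠ τ a := fun h' => ha h'.symm
  have hbc : τ a ≠ τ (τ a) := fun h' => hab (τ.injective h')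
  have hca : τ (τ (τ a)) = a := h3a
  have hac : a ≠ τ (τ a) := fun h' => by
    have h2 := congrArg τ h'
    rw [h3a] at h2
    exact hab h2.symm
  refine ⟨a, τ a, τ (τ a), hab, hac, hbc, ?_⟩
  have hsub : ({a, τ a, τ (τ a)} : Finset α) ⊆ τ.support := by
    intro x hx
    simp only [Finset.mem_insert, Finset.mem_singleton] at hx
    rcases hx with rfl | rfl | rfl <;> rw [Equiv.Perm.mem_support]
    · exact fun h' => hab h'.symm
    · exact fun h' => hbc h'.symm
    · rw [h3a]; exact fun h' => hac h'
  have hcard : ({a, τ a, τ (τ a)} : Finset α).card = 3 := by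
    rw [Finset.card_insert_of_notMem (by simp [hab, hac]),
      Finset.card_insert_of_notMem (by simp [hbc]), Finset.card_singleton]
  have hsupp : τ.support = {a, τ a, τ (τ a)} :=
    (Finset.eq_of_subset_of_card_le hsub (by rw [h.card_support, hcard])).symm
  ext y
  by_cases hya : y = a
  · rw [hya, trip_fst (Ne.symm hab) hbc]
  by_cases hyb : y = τ a
  · rw [hyb, trip_snd]
  by_cases hyc : y = τ (τ a)
  · rw [hyc, trip_thd (Ne.symm hac) (Ne.symm hbc), h3a]
  · rw [trip_other hya hyb hyc]
    have : y ∉ τ.support := by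
      rw [hsupp]; simp [hya, hyb, hyc]
    exact Equiv.Perm.notMem_support.mp this

section gen

lemma zmod_cast_ne {p : ℕ} {m n : ℕ} (hm : m < p) (hn : n < p) (hmn : m ≠ n) :
    (m : ZMod p) ≠ (n : ZMod p) := by
  intro h
  have h2 := congrArg ZMod.val h
  rw [ZMod.val_cast_of_lt hm, ZMod.val_cast_of_lt hn] at h2
  exact hmn h2

lemma gen_lemma (p : ℕ) [NeZero p] (hp : p.Prime) (hodd : p % 2 = 1)
    (σ : Equiv.Perm (ZMod p)) (hσ : ∀ x, σ x = x + 1) :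
    alternatingGroup (ZMod p) ≤ Subgroup.closure {σ, trip (0 : ZMod p) 1 2} := by
  haveI : Fact p.Prime := ⟨hp⟩
  haveI : NeZero p := ⟨hp.ne_zero⟩
  have hp3 : 3 ≤ p := by have := hp.two_le; omega
  set H := Subgroup.closure {σ, trip (0 : ZMod p) 1 2} with hH
  have hσH : σ ∈ H := subset_closure (Set.mem_insert _ _)
  have htH : trip (0 : ZMod p) 1 2 ∈ H := subset_closure (Set.mem_insert_of_mem _ rfl)
  have hσn : ∀ (n : ℕ) (x : ZMod p), (σ ^ n) x = x + n := by
    intro n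
    induction n with
    | zero => simp
    | succ n ih =>
      intro x
      rw [pow_succ, Equiv.Perm.mul_apply, hσ, ih]
      push_cast
      ring
  have hshift : ∀ (s a b c : ZMod p), trip a b c ∈ H → trip (a + s) (b + s) (c + s) ∈ H := by
    intro s a b c hm
    have hval : ∀ x : ZMod p, (σ ^ s.val) x = x + s := by
      intro x; rw [hσn, ZMod.natCast_val, ZMod.cast_id]
    have h2 : (σ ^ s.val) * trip a b c * (σ ^ s.val)⁻¹ ∈ H :=
      H.mul_mem (H.mul_mem (H.pow_mem hσH _) hm) (H.inv_mem (H.pow_mem hσH _))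
    rwa [trip_conj, hval, hval, hval] at h2
  -- adjacent 3-cycles
  have he : ∀ s : ZMod p, trip s (s + 1) (s + 2) ∈ H := by
    intro s
    have := hshift s 0 1 2 htH
    rwa [zero_add, add_comm 1 s, add_comm 2 s] at this
  have hne : ∀ a b : ℕ, a < p → b < p → a ≠ b → (a : ZMod p) ≠ (b : ZMod p) :=
    fun a b ha hb hab => zmod_cast_ne ha hb hab
  -- step (iv): trip 0 n (n+1)
  have hc : ∀ n : ℕ, 1 ≤ n → n + 2 ≤ p → trip (0 : ZMod p) (n : ZMod p) ((n : ZMod p) + 1) ∈ H := by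
    intro n hn
    induction n, hn using Nat.le_induction with
    | base =>
      intro _
      have : ((1 : ℕ) : ZMod p) = 1 := by push_cast; ring
      rw [this, show ((1 : ZMod p) + 1) = 2 by norm_num]
      exact htH
    | succ n hn ih =>
      intro hle
      have prev := ih (by omega)
      have h1 : (0 : ZMod p) ≠ (n : ZMod p) := by
        have := hne 0 n (by omega) (by omega) (by omega); push_cast at this; exact this
      have h2 : (0 : ZMod p) ≠ (n : ZMod p) + 1 := by
        have := hne 0 (n+1) (by omega) (by omega) (by omega); push_cast at this; exact this
      have h3 : (0 : ZMod p) ≠ (n : ZMod p) + 2 := by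
        have := hne 0 (n+2) (by omega) (by omega) (by omega); push_cast at this; exact this
      have h4 : (n : ZMod p) + 1 ≠ (n : ZMod p) := by
        have := hne (n+1) n (by omega) (by omega) (by omega); push_cast at this; exact this
      have h5 : (n : ZMod p) + 1 ≠ (n : ZMod p) + 2 := by
        have := hne (n+1) (n+2) (by omega) (by omega) (by omega); push_cast at this; exact this
      have hstep : trip ((n : ZMod p)) ((n : ZMod p) + 1) ((n : ZMod p) + 2) *
          trip (0 : ZMod p) (n : ZMod p) ((n : ZMod p) + 1) *
          (trip ((n : ZMod p)) ((n : ZMod p) + 1) ((n : ZMod p) + 2))⁻¹ =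
          trip (0 : ZMod p) ((n : ZMod p) + 1) ((n : ZMod p) + 2) := by
        rw [trip_conj, trip_other h1 h2 h3, trip_fst h4 h5, trip_snd]
      have hmem := H.mul_mem (H.mul_mem (he (n : ZMod p)) prev) (H.inv_mem (he (n : ZMod p)))
      rw [hstep] at hmem
      push_cast
      convert hmem using 2 <;> ring
  -- step (v-a): trip 0 m n for m < n ≤ p-2
  have hd : ∀ m n : ℕ, 1 ≤ m → m < n → n + 2 ≤ p → trip (0 : ZMod p) (m : ZMod p) (n : ZMod p) ∈ H := by
    intro m n hm1 hmn
    induction n, hmn using Nat.le_induction with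
    | base =>
      intro hle
      have := hc m hm1 (by omega)
      push_cast
      convert this using 2 <;> ring
    | succ n hn ih =>
      intro hle
      have prev := ih (by omega)
      have h1 : (0 : ZMod p) ≠ (n : ZMod p) := by
        have := hne 0 n (by omega) (by omega) (by omega); push_cast at this; exact this
      have h2 : (0 : ZMod p) ≠ (n : ZMod p) + 1 := by
        have := hne 0 (n+1) (by omega) (by omega) (by omega); push_cast at this; exact this
      have h3 : (0 : ZMod p) ≠ (n : ZMod p) + 2 := by
        have := hne 0 (n+2) (by omega) (by omega) (by omega); push_cast at this; exact this
      have h4 : (m : ZMod p) ≠ (n : ZMod p) := by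
        have := hne m n (by omega) (by omega) (by omega); push_cast at this; exact this
      have h5 : (m : ZMod p) ≠ (n : ZMod p) + 1 := by
        have := hne m (n+1) (by omega) (by omega) (by omega); push_cast at this; exact this
      have h6 : (m : ZMod p) ≠ (n : ZMod p) + 2 := by
        have := hne m (n+2) (by omega) (by omega) (by omega); push_cast at this; exact this
      have h7 : (n : ZMod p) + 1 ≠ (n : ZMod p) := by
        have := hne (n+1) n (by omega) (by omega) (by omega); push_cast at this; exact this
      have h8 : (n : ZMod p) + 1 ≠ (n : ZMod p) + 2 := by
        have := hne (n+1) (n+2) (by omega) (by omega) (by omega); push_cast at this; exact this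
      have hstep : trip ((n : ZMod p)) ((n : ZMod p) + 1) ((n : ZMod p) + 2) *
          trip (0 : ZMod p) (m : ZMod p) (n : ZMod p) *
          (trip ((n : ZMod p)) ((n : ZMod p) + 1) ((n : ZMod p) + 2))⁻¹ =
          trip (0 : ZMod p) (m : ZMod p) ((n : ZMod p) + 1) := by
        rw [trip_conj, trip_other h1 h2 h3, trip_other h4 h5 h6, trip_fst h7 h8]
      have hmem := H.mul_mem (H.mul_mem (he (n : ZMod p)) prev) (H.inv_mem (he (n : ZMod p)))
      rw [hstep] at hmem
      push_cast
      exact hmem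
  have hone : (1 : ZMod p) ≠ 0 := one_ne_zero
  have hmone : (-1 : ZMod p) ≠ 0 := by
    intro h
    exact hone (by rw [← neg_neg (1 : ZMod p), h, neg_zero])
  have hcastp1 : ((p - 1 : ℕ) : ZMod p) = -1 := by
    rw [Nat.cast_sub hp.one_le, ZMod.natCast_self]
    push_cast
    ring
  have h01 : (0 : ZMod p) ≠ 1 := hone.symm
  have h0m1 : (0 : ZMod p) ≠ -1 := fun h => hmone h.symm
  have h1m1 : (1 : ZMod p) ≠ -1 := by
    rw [← hcastp1]
    have := hne 1 (p-1) (by omega) (by omega) (by omega)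
    simpa using this
  -- the base shifted cycle : trip (-1) 0 1 ∈ H
  have hbase : trip (-1 : ZMod p) 0 1 ∈ H := by
    have h2 := hshift (-1) 0 1 2 htH
    norm_num at h2
    convert h2 using 2 <;> ring
  -- step (v-b)
  have hd' : ∀ m : ℕ, 1 ≤ m → m + 2 ≤ p → trip (0 : ZMod p) (m : ZMod p) (-1 : ZMod p) ∈ H := by
    intro m hm1 hm2
    have hm0 : (m : ZMod p) ≠ 0 := by
      have := hne m 0 (by omega) (by omega) (by omega); push_cast at this; exact this
    have hmm1 : (m : ZMod p) ≠ -1 := by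
      rw [← hcastp1]
      exact hne m (p-1) (by omega) (by omega) (by omega)
    have haux : trip (0 : ZMod p) 1 ((m : ZMod p) + 1) ∈ H := by
      rcases Nat.lt_or_ge (m + 1) (p - 1) with hlt | hge
      · have := hd 1 (m + 1) le_rfl (by omega) (by omega)
        push_cast at this
        convert this using 2 <;> norm_num
      · -- m = p - 2, so m + 1 casts to -1
        have hmp : m = p - 2 := by omega
        have : ((m : ZMod p) + 1) = -1 := by
          rw [hmp, ← hcastp1]
          have : ((p - 2 : ℕ) : ZMod p) = ((p - 1 : ℕ) : ZMod p) - 1 := by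
            rw [Nat.cast_sub (by omega), Nat.cast_sub hp.one_le]
            push_cast
            ring
          rw [this, hcastp1]
          ring
        rw [this, trip_rot h01 h0m1 h1m1]
        exact hbase
    have hrot : trip (0 : ZMod p) (m : ZMod p) (-1) = trip (-1 : ZMod p) 0 (m : ZMod p) :=
      trip_rot hm0.symm h0m1 hmm1
    rw [hrot]
    have h2 := hshift (-1) 0 1 ((m : ZMod p) + 1) haux
    norm_num at h2
    convert h2 using 2 <;> ring
  -- all trip 0 a b
  have key : ∀ a b : ZMod p, a ≠ 0 → b ≠ 0 → a.val < b.val → trip (0 : ZMod p) a b ∈ H := by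
    intro a b ha hb hab
    have haval : ((a.val : ℕ) : ZMod p) = a := by rw [ZMod.natCast_val, ZMod.cast_id]
    have hbval : ((b.val : ℕ) : ZMod p) = b := by rw [ZMod.natCast_val, ZMod.cast_id]
    have ha1 : 1 ≤ a.val := by
      rcases Nat.eq_zero_or_pos a.val with h | h
      · exact absurd ((ZMod.val_eq_zero a).mp h) ha
      · exact h
    have hblt : b.val < p := ZMod.val_lt b
    rcases Nat.lt_or_ge (b.val) (p - 1) with hlt | hge
    · have := hd a.val b.val ha1 hab (by omega)
      rwa [haval, hbval] at this
    · have hbp : b.val = p - 1 := by omega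
      have hbm1 : b = -1 := by rw [← hbval, hbp, hcastp1]
      rw [hbm1, ← haval]
      exact hd' a.val ha1 (by omega)
  have h0ab : ∀ a b : ZMod p, a ≠ 0 → b ≠ 0 → a ≠ b → trip (0 : ZMod p) a b ∈ H := by
    intro a b ha hb hab
    rcases lt_trichotomy a.val b.val with h | h | h
    · exact key a b ha hb h
    · exfalso
      apply hab
      have haval : ((a.val : ℕ) : ZMod p) = a := by rw [ZMod.natCast_val, ZMod.cast_id]
      have hbval : ((b.val : ℕ) : ZMod p) = b := by rw [ZMod.natCast_val, ZMod.cast_id]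
      rw [← haval, ← hbval, h]
    · rw [← trip_inv]
      exact H.inv_mem (key b a hb ha h)
  -- all 3-cycles
  have htrip : ∀ a b c : ZMod p, a ≠ b → a ≠ c → b ≠ c → trip a b c ∈ H := by
    intro a b c hab hac hbc
    by_cases ha : a = 0
    · rw [ha] at hab hac ⊢
      exact h0ab b c hab.symm hac.symm hbc
    by_cases hb : b = 0
    · rw [hb] at hab hbc ⊢
      rw [trip_rot hab hac hbc, trip_rot (Ne.symm hac) (Ne.symm hbc) hab]
      exact h0ab c a (Ne.symm hbc) hab (Ne.symm hac)
    by_cases hcz : c = 0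
    · rw [hcz] at hac hbc ⊢
      rw [trip_rot hab hac hbc]
      exact h0ab a b ha hb hab
    · rw [trip_mul (Ne.symm ha) (Ne.symm hb) (Ne.symm hcz) hab hac hbc]
      exact H.mul_mem (h0ab a b ha hb hab) (h0ab b c hb hcz hbc)
  rw [← Equiv.Perm.closure_three_cycles_eq_alternating]
  refine (Subgroup.closure_le _).mpr ?_
  intro τ hτ
  obtain ⟨a, b, c, hab, hac, hbc, rfl⟩ := IsThreeCycle.eq_trip hτ
  exact htrip a b c hab hac hbc


end gen

lemma sigma_pow {p : ℕ} (σ : Equiv.Perm (ZMod p)) (hσ : ∀ x, σ x = x + 1) :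
    ∀ (n : ℕ) (x : ZMod p), (σ ^ n) x = x + n := by
  intro n
  induction n with
  | zero => simp
  | succ n ih =>
    intro x
    rw [pow_succ, Equiv.Perm.mul_apply, hσ, ih]
    push_cast
    ring

lemma sigma_sign (p : ℕ) [NeZero p] (hp : p.Prime) (hodd : p % 2 = 1)
    (σ : Equiv.Perm (ZMod p)) (hσ : ∀ x, σ x = x + 1) : Equiv.Perm.sign σ = 1 := by
  haveI : Fact p.Prime := ⟨hp⟩
  have hsup : σ.support = Finset.univ := by
    ext x
    simp only [Equiv.Perm.mem_support, hσ, Finset.mem_univ, iff_true]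
    intro h
    exact one_ne_zero (by rwa [add_eq_left] at h)
  have hcyc : σ.IsCycle := by
    refine ⟨0, ?_, fun y hy => ⟨(y.val : ℤ), ?_⟩⟩
    · rw [hσ, zero_add]
      exact one_ne_zero
    · rw [zpow_natCast, sigma_pow σ hσ, ZMod.natCast_val, ZMod.cast_id, zero_add]
  rw [hcyc.sign, hsup, Finset.card_univ, ZMod.card]
  have : Odd p := Nat.odd_iff.mpr hodd
  rw [this.neg_one_pow, neg_neg]

lemma delta_inv (p : ℕ) [NeZero p] (hp : p.Prime) (hp3 : 3 ≤ p)
    (δ : Equiv.Perm (ZMod p)) (hδ : ∀ x, δ x = x ^ (p - 2)) : ∀ x : ZMod p, δ x = x⁻¹ := by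
  haveI : Fact p.Prime := ⟨hp⟩
  intro x
  rw [hδ]
  by_cases hx : x = 0
  · rw [hx, zero_pow (by omega), inv_zero]
  · have h1 : x ^ (p - 1) = 1 := ZMod.pow_card_sub_one_eq_one hx
    have h2 : x ^ (p - 2) * x = 1 := by
      rw [← pow_succ, show p - 2 + 1 = p - 1 by omega, h1]
    exact eq_inv_of_mul_eq_one_left h2

lemma delta_sign (p : ℕ) [NeZero p] (hp : p.Prime) (hp4 : p % 4 = 3)
    (δ : Equiv.Perm (ZMod p)) (hδ' : ∀ x : ZMod p, δ x = x⁻¹) : Equiv.Perm.sign δ = 1 := by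
  haveI : Fact p.Prime := ⟨hp⟩
  have hp3 : 3 ≤ p := by have := hp.two_le; omega
  have h1m1 : (1 : ZMod p) ≠ -1 := by
    have hc : ((p - 1 : ℕ) : ZMod p) = -1 := by
      rw [Nat.cast_sub hp.one_le, ZMod.natCast_self]; push_cast; ring
    rw [← hc]
    have := zmod_cast_ne (p := p) (m := 1) (n := p - 1) (by omega) (by omega) (by omega)
    simpa using this
  have hδ2 : δ ^ 2 = 1 := by
    ext x
    simp [pow_two, Equiv.Perm.mul_apply, hδ']
  have h0m1 : (0 : ZMod p) ≠ -1 := fun h => (neg_ne_zero.mpr (one_ne_zero : (1 : ZMod p) ≠ 0)) h.symm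
  have hsup : δ.support = Finset.univ \ {0, 1, -1} := by
    ext x
    rw [Equiv.Perm.mem_support, hδ']
    have heq : x⁻¹ = x ↔ (x = 0 ∨ x = 1 ∨ x = -1) := by
      constructor
      · intro hinv
        by_cases h0 : x = 0
        · exact Or.inl h0
        · have hsq : x * x = 1 := by
            have h2 := congrArg (x * ·) hinv
            rw [mul_inv_cancel₀ h0] at h2
            exact h2.symm
          rcases mul_self_eq_one_iff.mp hsq with h | h
          · exact Or.inr (Or.inl h)
          · exact Or.inr (Or.inr h)
      · rintro (rfl | rfl | rfl)
        · exact inv_zero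
        · exact inv_one
        · rw [inv_neg, inv_one]
    rw [ne_eq, heq]
    simp [not_or]
  have hcards : ({0, 1, -1} : Finset (ZMod p)).card = 3 := by
    rw [Finset.card_insert_of_notMem, Finset.card_insert_of_notMem, Finset.card_singleton]
    · simpa using h1m1
    · rw [Finset.mem_insert, Finset.mem_singleton]
      push_neg
      exact ⟨zero_ne_one, h0m1⟩
  have hsupcard : δ.support.card = p - 3 := by
    rw [hsup, Finset.card_sdiff_of_subset (Finset.subset_univ _), Finset.card_univ, ZMod.card, hcards]
  have horder : δ ^ 2 = 1 := hδ2
  have hall2 : ∀ n ∈ δ.cycleType, n = 2 := by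
    intro n hn
    have h2le : 2 ≤ n := Equiv.Perm.two_le_of_mem_cycleType hn
    have hdvd : n ∣ 2 := by
      have hlcm : n ∣ δ.cycleType.lcm := Multiset.dvd_lcm hn
      rw [Equiv.Perm.lcm_cycleType] at hlcm
      exact hlcm.trans (orderOf_dvd_of_pow_eq_one horder)
    exact le_antisymm (Nat.le_of_dvd (by norm_num) hdvd) h2le
  have hrep : δ.cycleType = Multiset.replicate (Multiset.card δ.cycleType) 2 :=
    Multiset.eq_replicate.mpr ⟨rfl, hall2⟩
  have hsum : δ.cycleType.sum = p - 3 := by rw [Equiv.Perm.sum_cycleType, hsupcard]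
  have h2k : 2 * Multiset.card δ.cycleType = p - 3 := by
    conv_rhs => rw [← hsum]
    rw [hrep, Multiset.sum_replicate, Multiset.card_replicate, smul_eq_mul, mul_comm]
  rw [Equiv.Perm.sign_of_cycleType, hsum]
  have heven : Even (p - 3 + Multiset.card δ.cycleType) := by
    rw [Nat.even_iff]
    omega
  exact Even.neg_one_pow heven

lemma word_eq (p : ℕ) [NeZero p] (hp : p.Prime) (hodd : p % 2 = 1)
    (σ δ : Equiv.Perm (ZMod p)) (hσ : ∀ x, σ x = x + 1) (hδ' : ∀ x : ZMod p, δ x = x⁻¹) :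
    δ * σ * δ * σ⁻¹ * σ⁻¹ * (δ * σ * δ * σ⁻¹ * σ⁻¹) = trip (0 : ZMod p) 1 2 := by
  haveI : Fact p.Prime := ⟨hp⟩
  have hp3 : 3 ≤ p := by have := hp.two_le; omega
  have hσi : ∀ x : ZMod p, σ⁻¹ x = x - 1 := by
    intro x
    have h : σ (x - 1) = x := by rw [hσ]; ring
    conv_lhs => rw [← h]
    rw [← Equiv.Perm.mul_apply, inv_mul_cancel, Equiv.Perm.one_apply]
  have hg : ∀ x : ZMod p, (δ * σ * δ * σ⁻¹ * σ⁻¹) x = ((x - 2)⁻¹ + 1)⁻¹ := by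
    intro x
    simp only [Equiv.Perm.mul_apply, hσi, hδ', hσ]
    rw [show x - 1 - 1 = x - 2 by ring]
  have h2ne : (2 : ZMod p) ≠ 0 := by
    have := zmod_cast_ne (p := p) (m := 2) (n := 0) (by omega) (by omega) (by omega)
    simpa using this
  have h1ne : (1 : ZMod p) ≠ 0 := one_ne_zero
  have h21 : (2 : ZMod p) ≠ 1 := by
    have := zmod_cast_ne (p := p) (m := 2) (n := 1) (by omega) (by omega) (by omega)
    simpa using this
  have hhalf : (2⁻¹ : ZMod p) + 2⁻¹ = 1 := by
    rw [show (2⁻¹ : ZMod p) + 2⁻¹ = 2⁻¹ * 2 by ring, inv_mul_cancel₀ h2ne]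
  have hg0 : (((0 : ZMod p) - 2)⁻¹ + 1)⁻¹ = 2 := by
    rw [show (0 : ZMod p) - 2 = -2 by ring, inv_neg,
      show (-(2 : ZMod p)⁻¹ + 1) = 2⁻¹ by rw [← hhalf]; ring]
    exact inv_inv 2
  have hg1 : (((1 : ZMod p) - 2)⁻¹ + 1)⁻¹ = 0 := by
    rw [show (1 : ZMod p) - 2 = -1 by ring, inv_neg, inv_one, neg_add_cancel, inv_zero]
  have hg2 : (((2 : ZMod p) - 2)⁻¹ + 1)⁻¹ = 1 := by
    rw [show (2 : ZMod p) - 2 = 0 by ring, inv_zero, zero_add, inv_one]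
  have hgen : ∀ x : ZMod p, x ≠ 0 → x ≠ 1 → x ≠ 2 →
      ((((x - 2)⁻¹ + 1)⁻¹ - 2)⁻¹ + 1)⁻¹ = x := by
    intro x hx0 hx1 hx2
    have hx1' : x - 1 ≠ 0 := sub_ne_zero.mpr hx1
    have hx2' : x - 2 ≠ 0 := sub_ne_zero.mpr hx2
    have ha : (x - 2)⁻¹ + 1 = (x - 1) * (x - 2)⁻¹ := by
      field_simp
      ring
    have hy : ((x - 2)⁻¹ + 1)⁻¹ = (x - 2) * (x - 1)⁻¹ := by
      rw [ha, mul_inv, inv_inv]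
      ring
    have hb : (x - 2) * (x - 1)⁻¹ - 2 = (-x) * (x - 1)⁻¹ := by
      field_simp
      ring
    have hbinv : ((-x) * (x - 1)⁻¹)⁻¹ = (x - 1) * (-x)⁻¹ := by
      rw [mul_inv, inv_inv]
      ring
    have hc : (x - 1) * (-x)⁻¹ + 1 = x⁻¹ := by
      rw [inv_neg]
      field_simp
      ring
    rw [hy, hb, hbinv, hc, inv_inv]
  ext x
  rw [Equiv.Perm.mul_apply, hg, hg]
  by_cases hx0 : x = 0
  · rw [hx0, hg0, hg2, trip_fst h1ne (fun h => h21 h.symm)]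
  by_cases hx1 : x = 1
  · rw [hx1, hg1, hg0, trip_snd]
  by_cases hx2 : x = 2
  · rw [hx2, hg2, hg1, trip_thd h2ne h21]
  · rw [hgen x hx0 hx1 hx2, trip_other hx0 hx1 hx2]

theorem stmt_13 (p : ℕ) (hp : p.Prime) [NeZero p] (hp4 : p % 4 = 3)
    (σ δ : Equiv.Perm (ZMod p)) (hσ : ∀ x, σ x = x + 1)
    (hδ : ∀ x, δ x = x ^ (p - 2)) :
    Subgroup.closure {σ, δ} = alternatingGroup (ZMod p) := by
  haveI : Fact p.Prime := ⟨hp⟩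
  have hodd : p % 2 = 1 := by omega
  have hp3 : 3 ≤ p := by omega
  have hδ' := delta_inv p hp hp3 δ hδ
  apply le_antisymm
  · rw [Subgroup.closure_le]
    intro f hf
    simp only [Set.mem_insert_iff, Set.mem_singleton_iff] at hf
    rcases hf with rfl | rfl
    · exact Equiv.Perm.mem_alternatingGroup.mpr (sigma_sign p hp hodd f hσ)
    · exact Equiv.Perm.mem_alternatingGroup.mpr (delta_sign p hp hp4 f hδ')
  · refine (gen_lemma p hp hodd σ hσ).trans ?_
    rw [Subgroup.closure_le]
    intro f hf
    simp only [Set.mem_insert_iff, Set.mem_singleton_iff] at hf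
    have hσm : σ ∈ Subgroup.closure {σ, δ} := Subgroup.subset_closure (Set.mem_insert _ _)
    have hδm : δ ∈ Subgroup.closure {σ, δ} :=
      Subgroup.subset_closure (Set.mem_insert_of_mem _ rfl)
    rcases hf with rfl | rfl
    · exact hσm
    · rw [SetLike.mem_coe, ← word_eq p hp hodd σ δ hσ hδ']
      have hgm : δ * σ * δ * σ⁻¹ * σ⁻¹ ∈ Subgroup.closure {σ, δ} :=
        mul_mem (mul_mem (mul_mem (mul_mem hδm hσm) hδm) (inv_mem hσm)) (inv_mem hσm)
      exact mul_mem hgm hgm
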